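/- Let Λ be a basic finite dimensional algebra, k a source of its quiver with P_k the associated simple projective module, and suppose P_k is not injective. Then T_k := τ⁻P_k ⊕ Λ/P_k is a tilting module, i.e. (i) pd T_k ≤ 1, (ii) Ext¹_Λ(T_k, T_k) = 0, and (iii) there is a short exact sequence 0 → Λ → T⁰ → T¹ → 0 with T⁰, T¹ ∈ add T_k. -/

import Mathlib

open CategoryTheory

section ModulePreamble

variable (Λ : Type) [Ring Λ]

/-- `P` is (isomorphic to) a direct summand of `X`. -/
def IsSummandOf (P X : Type) [AddCommGroup P] [Module Λ P] [AddCommGroup X] [Module Λ X] :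
    Prop :=
  ∃ (s : P →ₗ[Λ] X) (r : X →ₗ[Λ] P), r.comp s = LinearMap.id

/-- `X` belongs to `add T`: `X` is a direct summand of a finite direct sum of copies of `T`. -/
def InAdd (X T : Type) [AddCommGroup X] [Module Λ X] [AddCommGroup T] [Module Λ T] : Prop :=
  ∃ (n : ℕ) (s : X →ₗ[Λ] (Fin n → T)) (r : (Fin n → T) →ₗ[Λ] X), r.comp s = LinearMap.id

/-- `h` lies in the radical `rad_Λ(X, Y)` of the module category: for every `g : Y → X`
    the endomorphism `1 - g∘h` of `X` is invertible.  (Equivalently, no component of `h`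
    between indecomposable direct summands is an isomorphism.) -/
def IsRadHom (X Y : Type) [AddCommGroup X] [Module Λ X] [AddCommGroup Y] [Module Λ Y]
    (h : X →ₗ[Λ] Y) : Prop :=
  ∀ g : Y →ₗ[Λ] X, IsUnit ((1 : Module.End Λ X) - (g.comp h : Module.End Λ X))

/-- An almost split (Auslander–Reiten) sequence `0 → A → B → C → 0`. -/
structure AlmostSplitSequence (A B C : Type) [AddCommGroup A] [Module Λ A]
    [AddCommGroup B] [Module Λ B] [AddCommGroup C] [Module Λ C] where
  f : A →ₗ[Λ] B
  g : B →ₗ[Λ] C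
  inj : Function.Injective f
  surj : Function.Surjective g
  exact : LinearMap.range f = LinearMap.ker g
  nonSplit : ¬ ∃ r : B →ₗ[Λ] A, r.comp f = LinearMap.id
  leftAlmostSplit : ∀ (X : Type) [AddCommGroup X] [Module Λ X] (u : A →ₗ[Λ] X),
    (¬ ∃ r : X →ₗ[Λ] A, r.comp u = LinearMap.id) → ∃ v : B →ₗ[Λ] X, v.comp f = u
  rightAlmostSplit : ∀ (X : Type) [AddCommGroup X] [Module Λ X] (u : X →ₗ[Λ] C),
    (¬ ∃ s : C →ₗ[Λ] X, u.comp s = LinearMap.id) → ∃ v : X →ₗ[Λ] B, g.comp v = u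
  fMinimal : ∀ h : B →ₗ[Λ] B, h.comp f = f → Function.Bijective h
  gMinimal : ∀ h : B →ₗ[Λ] B, g.comp h = g → Function.Bijective h

/-- The module `M` has projective dimension at most 1: it admits a projective
    presentation `0 → P¹ → P⁰ → M → 0`. -/
def ProjDimLE1 (M : Type) [AddCommGroup M] [Module Λ M] : Prop :=
  ∃ (P0 P1 : ModuleCat Λ) (d : P1 ⟶ P0) (e : P0 ⟶ ModuleCat.of Λ M),
    Module.Projective Λ P0 ∧ Module.Projective Λ P1 ∧
    Function.Injective d ∧ Function.Surjective e ∧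
    LinearMap.range d.hom = LinearMap.ker e.hom

/-- The module `M` has projective dimension at most 2: it admits a projective resolution
    `0 → P² → P¹ → P⁰ → M → 0`. -/
def ProjDimLE2 (M : Type) [AddCommGroup M] [Module Λ M] : Prop :=
  ∃ (P0 P1 P2 : ModuleCat Λ) (d2 : P2 ⟶ P1) (d1 : P1 ⟶ P0) (e : P0 ⟶ ModuleCat.of Λ M),
    Module.Projective Λ P0 ∧ Module.Projective Λ P1 ∧ Module.Projective Λ P2 ∧
    Function.Injective d2 ∧ Function.Surjective e ∧
    LinearMap.range d2.hom = LinearMap.ker d1.hom ∧ LinearMap.range d1.hom = LinearMap.ker e.hom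

/-- The ring `Λ` has global dimension at most 2. -/
def GlobalDimLE2 : Prop := ∀ M : ModuleCat Λ, ProjDimLE2 Λ M

end ModulePreamble

section Aux


variable {Λ : Type} [Ring Λ]
variable {P E N : Type} [AddCommGroup P] [Module Λ P] [AddCommGroup E] [Module Λ E]
  [AddCommGroup N] [Module Λ N]

/-- helper: symm of ofInjective -/
lemma ofInj_symm {A B : Type} [AddCommGroup A] [Module Λ A] [AddCommGroup B] [Module Λ B]
    (i : A →ₗ[Λ] B) (hi : Function.Injective i) (t : A) (hm : i t ∈ LinearMap.range i) :
    (LinearEquiv.ofInjective i hi).symm ⟨i t, hm⟩ = t := by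
  apply hi
  have h1 := (LinearEquiv.ofInjective i hi).apply_symm_apply ⟨i t, hm⟩
  have h2 : ∀ a : A, ((LinearEquiv.ofInjective i hi) a : B) = i a := fun a => rfl
  calc i ((LinearEquiv.ofInjective i hi).symm ⟨i t, hm⟩)
      = (((LinearEquiv.ofInjective i hi) ((LinearEquiv.ofInjective i hi).symm ⟨i t, hm⟩)) : B) :=
        (h2 _).symm
    _ = i t := by rw [h1]

lemma end_zero_or_bij (hs : IsSimpleModule Λ P) (φ : P →ₗ[Λ] P) :
    φ = 0 ∨ Function.Bijective φ := by
  haveI := hs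
  rcases eq_bot_or_eq_top (LinearMap.ker φ) with hk | hk
  · rcases eq_bot_or_eq_top (LinearMap.range φ) with hr | hr
    · left
      ext x
      have : φ x ∈ LinearMap.range φ := LinearMap.mem_range_self _ x
      rw [hr] at this
      simpa using this
    · right
      exact ⟨LinearMap.ker_eq_bot.mp hk, LinearMap.range_eq_top.mp hr⟩
  · left
    ext x
    have : x ∈ LinearMap.ker φ := by rw [hk]; trivial
    simpa using this

lemma comp_f_eq_zero (hs : IsSimpleModule Λ P) (S : AlmostSplitSequence Λ P E N)
    (c : E →ₗ[Λ] P) : c.comp S.f = 0 := by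
  rcases end_zero_or_bij hs (c.comp S.f) with h | h
  · exact h
  · exfalso
    apply S.nonSplit
    refine ⟨(LinearEquiv.ofBijective (c.comp S.f) h).symm.toLinearMap.comp c, ?_⟩
    ext x
    have : (LinearEquiv.ofBijective (c.comp S.f) h) x = c (S.f x) := rfl
    simp only [LinearMap.comp_apply, LinearEquiv.coe_coe, LinearMap.id_apply]
    rw [← this, LinearEquiv.symm_apply_apply]

lemma not_summand_E (hs : IsSimpleModule Λ P) (S : AlmostSplitSequence Λ P E N) :
    ¬ IsSummandOf Λ P E := by
  rintro ⟨t, ρ, hρt⟩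
  have hρt' : ∀ x, ρ (t x) = x := fun x => DFunLike.congr_fun hρt x
  have hρf : ρ.comp S.f = 0 := comp_f_eq_zero hs S ρ
  set h : E →ₗ[Λ] E := LinearMap.id - t.comp ρ with hh
  have hbij : Function.Bijective h := by
    apply S.fMinimal
    ext x
    have : ρ (S.f x) = 0 := DFunLike.congr_fun hρf x
    simp [hh, this]
  haveI : Nontrivial P := IsSimpleModule.nontrivial Λ P
  obtain ⟨x, hx⟩ := exists_ne (0 : P)
  have h1 : h (t x) = 0 := by simp [hh, hρt' x]
  have h2 : t x = 0 := by
    have := hbij.injective (a₁ := t x) (a₂ := 0) (by simpa using h1)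
    exact this
  apply hx
  rw [← hρt' x, h2, map_zero]


lemma not_summand_N (hs : IsSimpleModule Λ P) (hproj : Module.Projective Λ P)
    (S : AlmostSplitSequence Λ P E N) : ¬ IsSummandOf Λ P N := by
  rintro ⟨s, r, hrs⟩
  obtain ⟨t, ht⟩ := Module.projective_lifting_property S.g s S.surj
  apply not_summand_E hs S
  refine ⟨t, r.comp S.g, ?_⟩
  ext x
  have h1 : S.g (t x) = s x := DFunLike.congr_fun ht x
  simp only [LinearMap.comp_apply, LinearMap.id_apply, h1]
  exact DFunLike.congr_fun hrs x

/-- build a retraction of f from a linear projection onto range f -/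
lemma retraction_of_proj (S : AlmostSplitSequence Λ P E N) (r0 : E →ₗ[Λ] LinearMap.range S.f)
    (h : ∀ x : P, r0 (S.f x) = ⟨S.f x, LinearMap.mem_range_self _ x⟩) :
    ∃ r : E →ₗ[Λ] P, r.comp S.f = LinearMap.id := by
  refine ⟨(LinearEquiv.ofInjective S.f S.inj).symm.toLinearMap.comp r0, ?_⟩
  ext x
  simp only [LinearMap.comp_apply, LinearEquiv.coe_coe, LinearMap.id_apply]
  rw [h x]
  exact ofInj_symm S.f S.inj x (LinearMap.mem_range_self _ x)

lemma g_comp_f (S : AlmostSplitSequence Λ P E N) (x : P) : S.g (S.f x) = 0 := by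
  have : S.f x ∈ LinearMap.ker S.g := S.exact ▸ LinearMap.mem_range_self _ x
  simpa using this

lemma g_not_split (S : AlmostSplitSequence Λ P E N) :
    ¬ ∃ σ : N →ₗ[Λ] E, S.g.comp σ = LinearMap.id := by
  rintro ⟨σ, hσ⟩
  have hσ' : ∀ y, S.g (σ y) = y := fun y => DFunLike.congr_fun hσ y
  set φ : E →ₗ[Λ] E := LinearMap.id - σ.comp S.g with hφ
  have hmem : ∀ m : E, φ m ∈ LinearMap.range S.f := by
    intro m
    rw [S.exact]
    simp [hφ, hσ' (S.g m)]
  apply S.nonSplit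
  apply retraction_of_proj S (LinearMap.codRestrict _ φ hmem)
  intro x
  apply Subtype.ext
  simp [hφ, g_comp_f S x]

lemma v_surj (S : AlmostSplitSequence Λ P E N) (hs : IsSimpleModule Λ P)
    {W : Type} [AddCommGroup W] [Module Λ W] (p : W →ₗ[Λ] N) (hp : Function.Surjective p)
    (v : W →ₗ[Λ] E) (hv : S.g.comp v = p) : Function.Surjective v := by
  haveI := hs
  have hv' : ∀ w, S.g (v w) = p w := fun w => DFunLike.congr_fun hv w
  have hsup : ∀ e : E, ∃ w z, e = v w + S.f z := by
    intro e
    obtain ⟨w, hw⟩ := hp (S.g e)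
    have : e - v w ∈ LinearMap.ker S.g := by simp [hv' w, hw]
    rw [← S.exact] at this
    obtain ⟨z, hz⟩ := this
    exact ⟨w, z, by rw [hz]; abel⟩
  rcases eq_bot_or_eq_top (Submodule.comap S.f (LinearMap.range v)) with hc | hc
  · exfalso
    have hdis : Disjoint (LinearMap.range S.f) (LinearMap.range v) := by
      rw [Submodule.disjoint_def]
      rintro x ⟨y, rfl⟩ hxv
      have : y ∈ Submodule.comap S.f (LinearMap.range v) := hxv
      rw [hc] at this
      simp only [Submodule.mem_bot] at this
      rw [this, map_zero]
    have hcod : Codisjoint (LinearMap.range S.f) (LinearMap.range v) := by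
      rw [codisjoint_iff_le_sup]
      intro e _
      obtain ⟨w, z, hwz⟩ := hsup e
      exact Submodule.mem_sup.mpr ⟨S.f z, LinearMap.mem_range_self _ z, v w,
        LinearMap.mem_range_self _ w, by rw [hwz]; abel⟩
    have hcompl : IsCompl (LinearMap.range S.f) (LinearMap.range v) := ⟨hdis, hcod⟩
    apply S.nonSplit
    apply retraction_of_proj S (Submodule.linearProjOfIsCompl _ _ hcompl)
    intro x
    exact Submodule.linearProjOfIsCompl_apply_left hcompl ⟨S.f x, LinearMap.mem_range_self _ x⟩
  · intro e
    obtain ⟨w, z, hwz⟩ := hsup e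
    have : S.f z ∈ LinearMap.range v := by
      have : z ∈ Submodule.comap S.f (LinearMap.range v) := by rw [hc]; trivial
      exact this
    obtain ⟨w', hw'⟩ := this
    exact ⟨w + w', by rw [map_add, hw', hwz]⟩


lemma split_epi_of_no_P (hs : IsSimpleModule Λ P) (hproj : Module.Projective Λ P)
    (S : AlmostSplitSequence Λ P E N) {X M : Type} [AddCommGroup X] [Module Λ X]
    [AddCommGroup M] [Module Λ M] (hX : ¬ IsSummandOf Λ P X)
    (ι : X →ₗ[Λ] M) (p : M →ₗ[Λ] N) (hp : Function.Surjective p)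
    (hex : LinearMap.range ι = LinearMap.ker p) :
    ∃ σ : N →ₗ[Λ] M, p.comp σ = LinearMap.id := by
  haveI := hs
  by_cases hsplit : ∃ σ : N →ₗ[Λ] M, p.comp σ = LinearMap.id
  · exact hsplit
  obtain ⟨v, hv⟩ := S.rightAlmostSplit M p hsplit
  have hv' : ∀ m, S.g (v m) = p m := fun m => DFunLike.congr_fun hv m
  have hvsurj : Function.Surjective v := v_surj S hs p hp v hv
  have hpι : ∀ x, p (ι x) = 0 := by
    intro x
    have : ι x ∈ LinearMap.ker p := hex ▸ LinearMap.mem_range_self _ x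
    simpa using this
  have hvι : ∀ x, (v.comp ι) x ∈ LinearMap.range S.f := by
    intro x
    rw [S.exact]
    simp [hv' (ι x), hpι x]
  set j : X →ₗ[Λ] P :=
    (LinearEquiv.ofInjective S.f S.inj).symm.toLinearMap.comp
      (LinearMap.codRestrict _ (v.comp ι) hvι) with hj
  have hfj : ∀ x, S.f (j x) = v (ι x) := by
    intro x
    have h2 : ∀ a : P, ((LinearEquiv.ofInjective S.f S.inj) a : E) = S.f a := fun a => rfl
    have h3 := (LinearEquiv.ofInjective S.f S.inj).apply_symm_apply
      ⟨v (ι x), hvι x⟩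
    calc S.f (j x) = ((LinearEquiv.ofInjective S.f S.inj) (j x) : E) := (h2 _).symm
      _ = v (ι x) := by
          rw [hj]
          simp only [LinearMap.comp_apply, LinearEquiv.coe_coe]
          rw [show (LinearMap.codRestrict _ (v.comp ι) hvι) x = ⟨v (ι x), hvι x⟩ from rfl, h3]
  rcases eq_bot_or_eq_top (LinearMap.range j) with hr | hr
  · -- j = 0, so v factors through N and g splits: contradiction
    exfalso
    have hj0 : ∀ x, v (ι x) = 0 := by
      intro x
      have : j x ∈ LinearMap.range j := LinearMap.mem_range_self _ x
      rw [hr] at this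
      simp only [Submodule.mem_bot] at this
      rw [← hfj x, this, map_zero]
    have hker : LinearMap.ker p ≤ LinearMap.ker v := by
      intro m hm
      rw [← hex] at hm
      obtain ⟨x, rfl⟩ := hm
      simpa using hj0 x
    set vb : N →ₗ[Λ] E :=
      ((LinearMap.ker p).liftQ v hker).comp (p.quotKerEquivOfSurjective hp).symm.toLinearMap
      with hvb
    have hvbp : ∀ m, vb (p m) = v m := by
      intro m
      have h4 : (p.quotKerEquivOfSurjective hp) (Submodule.Quotient.mk m) = p m := by
        simp [LinearMap.quotKerEquivOfSurjective]
      have h5 : (p.quotKerEquivOfSurjective hp).symm (p m) = Submodule.Quotient.mk m := by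
        rw [LinearEquiv.symm_apply_eq, h4]
      rw [hvb]
      simp only [LinearMap.comp_apply, LinearEquiv.coe_coe, h5]
      exact Submodule.liftQ_apply _ v m
    apply g_not_split S
    refine ⟨vb, ?_⟩
    ext y
    obtain ⟨m, rfl⟩ := hp y
    simp only [LinearMap.comp_apply, LinearMap.id_apply, hvbp m, hv' m]
  · -- j surjective: P is a summand of X
    exfalso
    apply hX
    obtain ⟨σ', hσ'⟩ := Module.projective_lifting_property j LinearMap.id
      (LinearMap.range_eq_top.mp hr)
    exact ⟨σ', j, hσ'⟩


lemma sections_B {K : Type} [Field K] [Algebra K Λ]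
    (hs : IsSimpleModule Λ P) (hproj : Module.Projective Λ P)
    (S : AlmostSplitSequence Λ P E N) :
    ∀ (d : ℕ) (M : Type) [AddCommGroup M] [Module Λ M] [Module K M] [IsScalarTower K Λ M]
      [FiniteDimensional K M], Module.finrank K M ≤ d → ∀ π : M →ₗ[Λ] E,
      Function.Surjective π → ∃ s : E →ₗ[Λ] M, π.comp s = LinearMap.id := by
  intro d
  induction d with
  | zero =>
    intro M _ _ _ _ _ hr π hπ
    haveI : Subsingleton M := Module.finrank_zero_iff (R := K).mp (Nat.le_zero.mp hr)
    haveI : Subsingleton E := hπ.subsingleton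
    exact ⟨0, by ext x; exact Subsingleton.elim _ _⟩
  | succ d ih =>
    intro M _ _ _ _ _ hr π hπ
    -- lift f through π
    obtain ⟨t, ht⟩ := Module.projective_lifting_property π S.f hπ
    have ht' : ∀ x, π (t x) = S.f x := fun x => DFunLike.congr_fun ht x
    have htinj : Function.Injective t := by
      intro a b hab
      apply S.inj
      rw [← ht' a, ← ht' b, hab]
    set p : Submodule Λ M := LinearMap.range t with hp
    -- quotient
    have hle : p ≤ LinearMap.ker (S.g.comp π) := by
      rintro m ⟨x, rfl⟩
      simp [ht' x, g_comp_f S x]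
    set πb : (M ⧸ p) →ₗ[Λ] N := p.liftQ (S.g.comp π) hle with hπb
    have hπbmk : ∀ m : M, πb (Submodule.Quotient.mk m) = S.g (π m) := fun m => rfl
    have hπbsurj : Function.Surjective πb := by
      intro n
      obtain ⟨e, he⟩ := S.surj n
      obtain ⟨m, rfl⟩ := hπ e
      exact ⟨Submodule.Quotient.mk m, by rw [hπbmk, he]⟩
    -- a map h : E → M⧸p with πb ∘ h = g
    have key : ∃ h : E →ₗ[Λ] (M ⧸ p), πb.comp h = S.g := by
      by_cases hsp : ∃ σ : N →ₗ[Λ] (M ⧸ p), πb.comp σ = LinearMap.id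
      · obtain ⟨σ, hσ⟩ := hsp
        exact ⟨σ.comp S.g, by rw [← LinearMap.comp_assoc, hσ, LinearMap.id_comp]⟩
      · obtain ⟨v, hv⟩ := S.rightAlmostSplit (M ⧸ p) πb hsp
        have hvsurj : Function.Surjective v := v_surj S hs πb hπbsurj v hv
        -- finrank of the quotient is smaller
        have hrank : Module.finrank K (M ⧸ p) ≤ d := by
          set q : M →ₗ[K] (M ⧸ p) := LinearMap.restrictScalars K p.mkQ with hq
          have hqsurj : Function.Surjective q := p.mkQ_surjective
          have hrange : LinearMap.range q = ⊤ := LinearMap.range_eq_top.mpr hqsurj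
          have e1 := LinearMap.finrank_range_add_finrank_ker q
          rw [hrange] at e1
          rw [finrank_top] at e1
          haveI : Nontrivial (LinearMap.ker q) := by
            haveI : Nontrivial P := IsSimpleModule.nontrivial Λ P
            obtain ⟨x, hx⟩ := exists_ne (0 : P)
            refine ⟨⟨⟨t x, ?_⟩, 0, ?_⟩⟩
            · simp only [LinearMap.mem_ker, hq, LinearMap.restrictScalars_apply,
                Submodule.mkQ_apply, Submodule.Quotient.mk_eq_zero]
              exact LinearMap.mem_range_self t x
            · intro hcon
              apply hx
              apply htinj
              simpa using congrArg Subtype.val hcon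
          have hpos : 0 < Module.finrank K (LinearMap.ker q) := Module.finrank_pos
          omega
        obtain ⟨s', hs'⟩ := ih (M ⧸ p) hrank v hvsurj
        refine ⟨s', ?_⟩
        rw [← hv, LinearMap.comp_assoc, hs', LinearMap.comp_id]
    obtain ⟨h, hh⟩ := key
    have hh' : ∀ e, πb (h e) = S.g e := fun e => DFunLike.congr_fun hh e
    -- now build the section of π
    set θ : M →ₗ[Λ] E × (M ⧸ p) := LinearMap.prod π p.mkQ with hθ
    have hθinj : Function.Injective θ := by
      rw [← LinearMap.ker_eq_bot]
      rw [Submodule.eq_bot_iff]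
      intro m hm
      simp only [LinearMap.mem_ker, hθ, LinearMap.prod_apply, Function.prod, Prod.mk_eq_zero,
        Submodule.mkQ_apply, Submodule.Quotient.mk_eq_zero] at hm
      obtain ⟨hm1, hm2⟩ := hm
      obtain ⟨x, rfl⟩ := hm2
      rw [ht' x] at hm1
      rw [show x = 0 from S.inj (by simpa using hm1), map_zero]
    have hmem : ∀ e : E, (e, h e) ∈ LinearMap.range θ := by
      intro e
      obtain ⟨m₀, hm₀⟩ := p.mkQ_surjective (h e)
      have h6 : S.g (π m₀) = S.g e := by
        rw [← hπbmk m₀, show (Submodule.Quotient.mk m₀ : M ⧸ p) = p.mkQ m₀ from rfl, hm₀, hh' e]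
      have h7 : π m₀ - e ∈ LinearMap.ker S.g := by simp [h6]
      rw [← S.exact] at h7
      obtain ⟨z, hz⟩ := h7
      refine ⟨m₀ - t z, ?_⟩
      simp only [hθ, LinearMap.prod_apply, Function.prod, map_sub]
      rw [Prod.mk_sub_mk, Prod.mk.injEq]
      refine ⟨?_, ?_⟩
      · rw [ht' z, hz]; abel
      · have : p.mkQ (t z) = 0 := by
          simp only [Submodule.mkQ_apply, Submodule.Quotient.mk_eq_zero]
          exact LinearMap.mem_range_self t z
        rw [this, sub_zero, show p.mkQ m₀ = h e from hm₀]
    set θe := LinearEquiv.ofInjective θ hθinj with hθe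
    refine ⟨θe.symm.toLinearMap.comp
      (LinearMap.codRestrict _ (LinearMap.prod LinearMap.id h) hmem), ?_⟩
    ext e
    simp only [LinearMap.comp_apply, LinearEquiv.coe_coe, LinearMap.id_apply]
    have h8 : θ (θe.symm ⟨(e, h e), hmem e⟩) = (e, h e) := by
      have h9 := θe.apply_symm_apply ⟨(e, h e), hmem e⟩
      have h10 : ∀ m : M, (θe m : E × (M ⧸ p)) = θ m := fun m => rfl
      rw [← h10, h9]
    have h11 : π (θe.symm ⟨(e, h e), hmem e⟩) = e := congrArg Prod.fst h8
    have h12 : (LinearMap.codRestrict _ (LinearMap.prod LinearMap.id h) hmem) e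
        = ⟨(e, h e), hmem e⟩ := rfl
    rw [h12, h11]


lemma E_summand_Q {K : Type} [Field K] [Algebra K Λ] [FiniteDimensional K Λ]
    {Q : Type} [AddCommGroup Q] [Module Λ Q] [Module.Finite Λ E]
    (hs : IsSimpleModule Λ P) (hproj : Module.Projective Λ P)
    (S : AlmostSplitSequence Λ P E N) (decomp : Λ ≃ₗ[Λ] P × Q) :
    ∃ (n : ℕ) (sE : E →ₗ[Λ] (Fin n → Q)) (rE : (Fin n → Q) →ₗ[Λ] E),
      rE.comp sE = LinearMap.id ∧
      ∃ (sπ : E →ₗ[Λ] (Fin n → Λ)) (π : (Fin n → Λ) →ₗ[Λ] E), π.comp sπ = LinearMap.id := by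
  obtain ⟨n, π, hπ⟩ := Module.Finite.exists_fin' Λ E
  obtain ⟨sπ, hsπ⟩ := sections_B (K := K) hs hproj S (Module.finrank K (Fin n → Λ))
    (Fin n → Λ) le_rfl π hπ
  set F : (Fin n → P × Q) →ₗ[Λ] (Fin n → P) × (Fin n → Q) :=
    LinearMap.prod (LinearMap.pi fun i => (LinearMap.fst Λ P Q).comp (LinearMap.proj i))
      (LinearMap.pi fun i => (LinearMap.snd Λ P Q).comp (LinearMap.proj i)) with hF
  set G : (Fin n → P) × (Fin n → Q) →ₗ[Λ] (Fin n → P × Q) :=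
    LinearMap.pi fun i => LinearMap.prod
      ((LinearMap.proj i).comp (LinearMap.fst Λ (Fin n → P) (Fin n → Q)))
      ((LinearMap.proj i).comp (LinearMap.snd Λ (Fin n → P) (Fin n → Q))) with hG
  set D2 : (Fin n → P × Q) ≃ₗ[Λ] (Fin n → P) × (Fin n → Q) :=
    LinearEquiv.ofLinear F G rfl rfl with hD2
  set D : (Fin n → Λ) ≃ₗ[Λ] (Fin n → P) × (Fin n → Q) :=
    (LinearEquiv.piCongrRight fun _ : Fin n => decomp).trans D2 with hD
  set eP : E →ₗ[Λ] (Fin n → P) :=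
    (LinearMap.fst Λ _ _).comp (D.toLinearMap.comp sπ) with heP
  set eQ : E →ₗ[Λ] (Fin n → Q) :=
    (LinearMap.snd Λ _ _).comp (D.toLinearMap.comp sπ) with heQ
  set rP : (Fin n → P) →ₗ[Λ] E :=
    π.comp (D.symm.toLinearMap.comp (LinearMap.inl Λ _ _)) with hrP
  set rQ : (Fin n → Q) →ₗ[Λ] E :=
    π.comp (D.symm.toLinearMap.comp (LinearMap.inr Λ _ _)) with hrQ
  have hid : ∀ x : E, rP (eP x) + rQ (eQ x) = x := by
    intro x
    have h1 : (LinearMap.inl Λ (Fin n → P) (Fin n → Q)) (D (sπ x)).1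
        + (LinearMap.inr Λ (Fin n → P) (Fin n → Q)) (D (sπ x)).2 = D (sπ x) := by
      simp
    calc rP (eP x) + rQ (eQ x)
        = π (D.symm ((LinearMap.inl Λ (Fin n → P) (Fin n → Q)) (D (sπ x)).1
            + (LinearMap.inr Λ (Fin n → P) (Fin n → Q)) (D (sπ x)).2)) := by
          rw [map_add, map_add]; rfl
      _ = π (D.symm (D (sπ x))) := by rw [h1]
      _ = π (sπ x) := by rw [D.symm_apply_apply]
      _ = x := DFunLike.congr_fun hsπ x
  have hePf : ∀ x : P, eP (S.f x) = 0 := by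
    intro x
    funext i
    have := DFunLike.congr_fun (comp_f_eq_zero hs S ((LinearMap.proj i).comp eP)) x
    simpa using this
  set h : E →ₗ[Λ] E := LinearMap.id - rP.comp eP with hh
  have hbij : Function.Bijective h := by
    apply S.fMinimal
    ext x
    simp [hh, hePf x]
  set he := LinearEquiv.ofBijective h hbij with hhe
  refine ⟨n, eQ, he.symm.toLinearMap.comp rQ, ?_, sπ, π, hsπ⟩
  ext x
  have h2 : rQ (eQ x) = h x := by
    simp only [hh, LinearMap.sub_apply, LinearMap.id_apply, LinearMap.comp_apply]
    exact eq_sub_of_add_eq' (hid x)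
  simp only [LinearMap.comp_apply, LinearEquiv.coe_coe, LinearMap.id_apply, h2]
  exact he.symm_apply_apply x


end Aux

/-- Let `Λ` be a basic finite dimensional algebra, `k` a source of its
    quiver with simple projective non-injective module `P = P_k`, so that `Λ ≅ P ⊕ Q` with
    `Q = Λ/P_k` having no summand isomorphic to `P`, and let `0 → P → E → N → 0`
    (`N = τ⁻P`) be the almost split sequence starting at `P`.  Then the APR tilting module
    `T_k = τ⁻P ⊕ Λ/P_k = N × Q` is a tilting module:
    (i) `pd T_k ≤ 1`; (ii) `Ext¹(T_k, T_k) = 0` (every self-extension splits);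
    (iii) there is a short exact sequence `0 → Λ → T⁰ → T¹ → 0` with `T⁰, T¹ ∈ add T_k`. -/
theorem APR_module_is_tilting
    (K : Type) [Field K] (Λ : Type) [Ring Λ] [Algebra K Λ] [FiniteDimensional K Λ]
    (P Q E N : Type) [AddCommGroup P] [Module Λ P] [AddCommGroup Q] [Module Λ Q]
    [AddCommGroup E] [Module Λ E] [AddCommGroup N] [Module Λ N]
    [Module.Finite Λ P] [Module.Finite Λ Q] [Module.Finite Λ E] [Module.Finite Λ N]
    (hsimple : IsSimpleModule Λ P) (hproj : Module.Projective Λ P)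
    (hninj : ¬ Module.Injective Λ P)
    -- Λ decomposes as the direct sum of P and the remaining indecomposable projectives
    (decomp : (Λ ≃ₗ[Λ] P × Q))
    -- Λ basic: P occurs only once, i.e. Q has no direct summand isomorphic to P
    (hQ : ¬ IsSummandOf Λ P Q)
    (S : AlmostSplitSequence Λ P E N) :
    -- (i) projective dimension at most 1
    ProjDimLE1 Λ (N × Q) ∧
    -- (ii) Ext¹(T,T) = 0 : every short exact sequence 0 → T → M → T → 0 splits
    (∀ (M : Type) [AddCommGroup M] [Module Λ M] (i : (N × Q) →ₗ[Λ] M)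
        (p : M →ₗ[Λ] (N × Q)),
        Function.Injective i → Function.Surjective p →
        LinearMap.range i = LinearMap.ker p →
        ∃ r : M →ₗ[Λ] (N × Q), r.comp i = LinearMap.id) ∧
    -- (iii) a coresolution 0 → Λ → T⁰ → T¹ → 0 by modules in add T
    (∃ (T0 T1 : ModuleCat Λ) (u : Λ →ₗ[Λ] T0) (v : T0 ⟶ T1),
        InAdd Λ T0 (N × Q) ∧ InAdd Λ T1 (N × Q) ∧
        Function.Injective u ∧ Function.Surjective v ∧
        LinearMap.range u = LinearMap.ker v.hom) := by
  
  classical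
  haveI := hsimple
  haveI : Nontrivial P := IsSimpleModule.nontrivial Λ P
  -- Q is projective
  have hQproj : Module.Projective Λ Q := by
    refine Module.Projective.of_split (decomp.symm.toLinearMap.comp (LinearMap.inr Λ P Q))
      ((LinearMap.snd Λ P Q).comp decomp.toLinearMap) ?_
    ext q
    simp
  -- E is a direct summand of Qⁿ, and of a free module
  obtain ⟨n, sE, rE, hrE, sπ, π, hsπ⟩ := E_summand_Q (K := K) hsimple hproj S decomp
  have hEproj : Module.Projective Λ E := Module.Projective.of_split sπ π hsπ
  refine ⟨?_, ?_, ?_⟩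
  · -- (i) projective dimension at most 1
    haveI := hEproj; haveI := hQproj; haveI := hproj
    refine ⟨ModuleCat.of Λ (E × Q), ModuleCat.of Λ P,
      ModuleCat.ofHom ((LinearMap.inl Λ E Q).comp S.f : P →ₗ[Λ] E × Q),
      ModuleCat.ofHom (LinearMap.prodMap S.g LinearMap.id : E × Q →ₗ[Λ] N × Q), ?_, ?_, ?_, ?_, ?_⟩
    · show Module.Projective Λ (E × Q); infer_instance
    · exact hproj
    · intro a b hab
      apply S.inj
      exact congrArg Prod.fst hab
    · rintro ⟨y, q⟩
      obtain ⟨e, he⟩ := S.surj y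
      refine ⟨(e, q), ?_⟩
      show ((S.g e, q) : N × Q) = (y, q)
      rw [he]
    · apply le_antisymm
      · rintro _ ⟨x, rfl⟩
        simp only [LinearMap.mem_ker]
        show ((S.g (S.f x), (0 : Q)) : N × Q) = 0
        rw [g_comp_f S x]
        rfl
      · rintro ⟨a, b⟩ hz
        simp only [LinearMap.mem_ker] at hz
        have h1 : S.g a = 0 := congrArg Prod.fst hz
        have h2 : b = 0 := congrArg Prod.snd hz
        have : a ∈ LinearMap.ker S.g := by simpa using h1
        rw [← S.exact] at this
        obtain ⟨x, hx⟩ := this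
        refine ⟨x, ?_⟩
        show ((S.f x, (0 : Q)) : E × Q) = (a, b)
        rw [hx, h2]
  · -- (ii) every self-extension splits
    intro M _ _ i p hi hp hexact
    have hpi : ∀ z : N × Q, p (i z) = 0 := by
      intro z
      have : i z ∈ LinearMap.ker p := hexact ▸ LinearMap.mem_range_self _ z
      simpa using this
    -- P is not a summand of N × Q
    have hnsT : ¬ IsSummandOf Λ P (N × Q) := by
      rintro ⟨s, r, hrs⟩
      set u1 : P →ₗ[Λ] N := (LinearMap.fst Λ N Q).comp s with hu1
      set u2 : P →ₗ[Λ] Q := (LinearMap.snd Λ N Q).comp s with hu2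
      set w1 : N →ₗ[Λ] P := r.comp (LinearMap.inl Λ N Q) with hw1
      set w2 : Q →ₗ[Λ] P := r.comp (LinearMap.inr Λ N Q) with hw2
      have hsum : ∀ x : P, w1 (u1 x) + w2 (u2 x) = x := by
        intro x
        have h1 : (LinearMap.inl Λ N Q) (s x).1 + (LinearMap.inr Λ N Q) (s x).2 = s x := by
          simp
        calc w1 (u1 x) + w2 (u2 x)
            = r ((LinearMap.inl Λ N Q) (s x).1 + (LinearMap.inr Λ N Q) (s x).2) := by
              rw [map_add]; rfl
          _ = r (s x) := by rw [h1]
          _ = x := DFunLike.congr_fun hrs x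
      rcases end_zero_or_bij hsimple (w1.comp u1) with h0 | hbij
      · apply hQ
        refine ⟨u2, w2, ?_⟩
        ext x
        have h2 : w1 (u1 x) = 0 := DFunLike.congr_fun h0 x
        have := hsum x
        rw [h2, zero_add] at this
        simpa using this
      · apply not_summand_N hsimple hproj S
        refine ⟨u1, (LinearEquiv.ofBijective (w1.comp u1) hbij).symm.toLinearMap.comp w1, ?_⟩
        ext x
        have h3 : (LinearEquiv.ofBijective (w1.comp u1) hbij) x = w1 (u1 x) := rfl
        simp only [LinearMap.comp_apply, LinearEquiv.coe_coe, LinearMap.id_apply]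
        rw [← h3, LinearEquiv.symm_apply_apply]
    -- build the pullback extension of N and split it
    set c : M × N →ₗ[Λ] N × Q :=
      (p.comp (LinearMap.fst Λ M N)) - ((LinearMap.inl Λ N Q).comp (LinearMap.snd Λ M N))
      with hc
    set M₁ := LinearMap.ker c with hM₁
    have hmemι : ∀ z : N × Q, (LinearMap.prod i (0 : (N × Q) →ₗ[Λ] N)) z ∈ M₁ := by
      intro z
      simp only [hM₁, LinearMap.mem_ker, hc, LinearMap.sub_apply, LinearMap.comp_apply,
        LinearMap.fst_apply, LinearMap.snd_apply, LinearMap.prod_apply, Function.prod,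
        LinearMap.zero_apply, hpi z, map_zero, sub_zero]
    set ι : (N × Q) →ₗ[Λ] M₁ := LinearMap.codRestrict _ (LinearMap.prod i 0) hmemι with hι
    set p₁ : M₁ →ₗ[Λ] N := (LinearMap.snd Λ M N).comp M₁.subtype with hp₁
    have hp₁surj : Function.Surjective p₁ := by
      intro x
      obtain ⟨m, hm⟩ := hp (x, 0)
      refine ⟨⟨(m, x), ?_⟩, rfl⟩
      simp only [hM₁, LinearMap.mem_ker, hc, LinearMap.sub_apply, LinearMap.comp_apply,
        LinearMap.fst_apply, LinearMap.snd_apply, hm, LinearMap.inl_apply, sub_self]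
    have hexact₁ : LinearMap.range ι = LinearMap.ker p₁ := by
      apply le_antisymm
      · rintro _ ⟨w, rfl⟩
        simp only [LinearMap.mem_ker, hp₁, LinearMap.comp_apply, hι]
        rfl
      · rintro ⟨⟨m, x⟩, hz⟩ hker
        have hx : x = 0 := by simpa [hp₁] using hker
        subst hx
        have hz' : p m = 0 := by
          have := hz
          simp only [hM₁, LinearMap.mem_ker, hc, LinearMap.sub_apply, LinearMap.comp_apply,
            LinearMap.fst_apply, LinearMap.snd_apply, sub_eq_zero] at this
          rw [this]
          rfl
        have : m ∈ LinearMap.range i := by rw [hexact]; simpa using hz'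
        obtain ⟨w, hw⟩ := this
        refine ⟨w, ?_⟩
        apply Subtype.ext
        show (i w, 0) = (m, 0)
        rw [hw]
    obtain ⟨σ₁, hσ₁⟩ := split_epi_of_no_P hsimple hproj S hnsT ι p₁ hp₁surj hexact₁
    set sN : N →ₗ[Λ] M := (LinearMap.fst Λ M N).comp (M₁.subtype.comp σ₁) with hsNdef
    have hsN : ∀ x : N, p (sN x) = (x, 0) := by
      intro x
      have hz := (σ₁ x).2
      simp only [hM₁, LinearMap.mem_ker, hc, LinearMap.sub_apply, LinearMap.comp_apply,
        LinearMap.fst_apply, LinearMap.snd_apply, sub_eq_zero] at hz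
      have hx : ((σ₁ x : M × N)).2 = x := DFunLike.congr_fun hσ₁ x
      have : p (sN x) = (LinearMap.inl Λ N Q) ((σ₁ x : M × N)).2 := hz
      rw [this, hx]
      rfl
    haveI := hQproj
    obtain ⟨sQ, hsQ⟩ := Module.projective_lifting_property p (LinearMap.inr Λ N Q) hp
    set sT : (N × Q) →ₗ[Λ] M := LinearMap.coprod sN sQ with hsT
    have hps : ∀ z : N × Q, p (sT z) = z := by
      intro z
      have h1 : p (sQ z.2) = (0, z.2) := DFunLike.congr_fun hsQ z.2
      have : p (sT z) = p (sN z.1) + p (sQ z.2) := by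
        simp [hsT, map_add]
      rw [this, hsN z.1, h1]
      exact Prod.ext (by simp) (by simp)
    set φ : M →ₗ[Λ] M := LinearMap.id - sT.comp p with hφ
    have hmemφ : ∀ m, φ m ∈ LinearMap.range i := by
      intro m
      rw [hexact]
      simp only [LinearMap.mem_ker, hφ, LinearMap.sub_apply, LinearMap.id_apply,
        LinearMap.comp_apply, map_sub, hps (p m), sub_self]
    refine ⟨(LinearEquiv.ofInjective i hi).symm.toLinearMap.comp
      (LinearMap.codRestrict _ φ hmemφ), ?_⟩
    apply LinearMap.ext
    intro z
    have h1 : φ (i z) = i z := by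
      simp only [hφ, LinearMap.sub_apply, LinearMap.id_apply, LinearMap.comp_apply, hpi z,
        map_zero, sub_zero]
    have h2 : (LinearMap.codRestrict _ φ hmemφ) (i z) = ⟨i z, LinearMap.mem_range_self i z⟩ :=
      Subtype.ext h1
    simp only [LinearMap.comp_apply, LinearEquiv.coe_coe, LinearMap.id_apply, h2]
    exact ofInj_symm i hi z _
  · -- (iii) the coresolution 0 → Λ → E × Q → N → 0
    refine ⟨ModuleCat.of Λ (E × Q), ModuleCat.of Λ N,
      ((LinearMap.prodMap S.f LinearMap.id).comp decomp.toLinearMap : Λ →ₗ[Λ] E × Q),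
      ModuleCat.ofHom (S.g.comp (LinearMap.fst Λ E Q) : E × Q →ₗ[Λ] N), ?_, ?_, ?_, ?_, ?_⟩
    · -- E × Q ∈ add (N × Q)
      refine ⟨n + 1,
        LinearMap.pi (fun i : Fin (n+1) => Fin.cases
          ((LinearMap.inr Λ N Q).comp (LinearMap.snd Λ E Q))
          (fun j => (LinearMap.inr Λ N Q).comp
            ((LinearMap.proj j).comp (sE.comp (LinearMap.fst Λ E Q)))) i),
        LinearMap.prod
          (rE.comp (LinearMap.pi (fun j : Fin n => (LinearMap.snd Λ N Q).comp
            (LinearMap.proj j.succ))))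
          ((LinearMap.snd Λ N Q).comp (LinearMap.proj (0 : Fin (n+1)))), ?_⟩
      apply LinearMap.ext
      intro z
      simp only [LinearMap.comp_apply, LinearMap.pi_apply, LinearMap.prod_apply, Function.prod,
        LinearMap.snd_apply, LinearMap.fst_apply, LinearMap.proj_apply, LinearMap.inr_apply,
        Fin.cases_succ, Fin.cases_zero, LinearMap.id_apply]
      have h1 : rE (fun j : Fin n => sE z.1 j) = z.1 := DFunLike.congr_fun hrE z.1
      exact Prod.ext h1 rfl
    · -- N ∈ add (N × Q)
      refine ⟨1, LinearMap.pi (fun _ : Fin 1 => LinearMap.inl Λ N Q),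
        (LinearMap.fst Λ N Q).comp (LinearMap.proj (0 : Fin 1)), ?_⟩
      apply LinearMap.ext
      intro x
      rfl
    · -- u injective
      intro a b hab
      have h0 : (S.f.prodMap LinearMap.id) (decomp a) = (S.f.prodMap LinearMap.id) (decomp b) :=
        hab
      have h1 := congrArg Prod.fst h0
      have h2 := congrArg Prod.snd h0
      apply decomp.injective
      exact Prod.ext (S.inj h1) h2
    · -- v surjective
      intro y
      obtain ⟨e, he⟩ := S.surj y
      exact ⟨(e, 0), he⟩
    · -- exactness
      apply le_antisymm
      · rintro _ ⟨l, rfl⟩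
        simp only [LinearMap.mem_ker]
        show S.g (S.f (decomp l).1) = 0
        exact g_comp_f S _
      · rintro ⟨a, b⟩ hz
        have h1 : S.g a = 0 := hz
        have : a ∈ LinearMap.ker S.g := by simpa using h1
        rw [← S.exact] at this
        obtain ⟨x, hx⟩ := this
        refine ⟨decomp.symm (x, b), ?_⟩
        show (S.f.prodMap LinearMap.id) (decomp (decomp.symm (x, b))) = (a, b)
        rw [decomp.apply_symm_apply]
        show ((S.f x, b) : E × Q) = (a, b)
        rw [hx]
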